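/- Lemma 2.9 (per-edge characterization of discrete conformal vector fields, spherical case). Let γ_i, γ_j : ℝ → ℝ³ be curves with ‖γ_i(t)‖ = 1 and ‖γ_j(t)‖ = 1 for all t, differentiable at t = 0 with derivatives ξ_i := γ_i′(0) and ξ_j := γ_j′(0). Set p_i := γ_i(0), p_j := γ_j(0), assume −1 < ⟨p_i, p_j⟩ < 1, set λ_0 := arccos⟨p_i,p_j⟩, and let u_i, u_j ∈ ℝ. Then the spherical edge length function t ↦ arccos⟨γ_i(t), γ_j(t)⟩ has derivative (u_i + u_j)·tan(λ_0/2) at t = 0 if and only if ⟨ξ_j − ξ_i, p_j − p_i⟩ = ((u_i + u_j)/2)·‖p_j − p_i‖². -/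

import Mathlib

set_option maxHeartbeats 1000000


noncomputable section

/-- Standard inner product on `ℝ³`. -/
def dot3 (x y : Fin 3 → ℝ) : ℝ := x 0 * y 0 + x 1 * y 1 + x 2 * y 2

/-- Euclidean norm on `ℝ³`. -/
def norm3 (x : Fin 3 → ℝ) : ℝ := Real.sqrt (dot3 x x)

lemma dot3_self_nonneg (x : Fin 3 → ℝ) : 0 ≤ dot3 x x := by
  unfold dot3; nlinarith [mul_self_nonneg (x 0), mul_self_nonneg (x 1), mul_self_nonneg (x 2)]

lemma hasDerivAt_dot3 {γi γj : ℝ → Fin 3 → ℝ} {ξi ξj : Fin 3 → ℝ} {t : ℝ}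
    (hdi : HasDerivAt γi ξi t) (hdj : HasDerivAt γj ξj t) :
    HasDerivAt (fun s => dot3 (γi s) (γj s))
      (dot3 ξi (γj t) + dot3 (γi t) ξj) t := by
  have hic : ∀ k, HasDerivAt (fun s => γi s k) (ξi k) t := fun k =>
    hasDerivAt_pi.1 hdi k
  have hjc : ∀ k, HasDerivAt (fun s => γj s k) (ξj k) t := fun k =>
    hasDerivAt_pi.1 hdj k
  have h := (((hic 0).mul (hjc 0)).add ((hic 1).mul (hjc 1))).add
    ((hic 2).mul (hjc 2))
  refine HasDerivAt.congr_deriv h ?_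
  unfold dot3; ring

lemma dot3_orth {γ : ℝ → Fin 3 → ℝ} {ξ : Fin 3 → ℝ}
    (hγ : ∀ t, norm3 (γ t) = 1) (hd : HasDerivAt γ ξ 0) :
    dot3 ξ (γ 0) = 0 := by
  have hone : ∀ t, dot3 (γ t) (γ t) = 1 := by
    intro t
    have h := hγ t
    unfold norm3 at h
    nlinarith [Real.sq_sqrt (dot3_self_nonneg (γ t)), dot3_self_nonneg (γ t)]
  have hconst : HasDerivAt (fun s => dot3 (γ s) (γ s)) 0 0 := by
    have : (fun s => dot3 (γ s) (γ s)) = fun _ => (1 : ℝ) := funext hone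
    rw [this]; exact hasDerivAt_const 0 1
  have := hconst.unique (hasDerivAt_dot3 hd hd)
  have hsymm : dot3 ξ (γ 0) = dot3 (γ 0) ξ := by unfold dot3; ring
  linarith [this, hsymm]

/-- Lemma 2.9 (spherical case): a tangent vector field on the two endpoints of a spherical
edge induces a discretely conformal (vertex scaling) change of the edge length with
conformal factors `u_i, u_j` iff
`⟨ξ_j − ξ_i, p_j − p_i⟩ = ((u_i + u_j)/2)·‖p_j − p_i‖²`. -/
theorem sph_discrete_conformal_char
    (γi γj : ℝ → Fin 3 → ℝ)
    (hγi : ∀ t, norm3 (γi t) = 1) (hγj : ∀ t, norm3 (γj t) = 1)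
    (ξi ξj : Fin 3 → ℝ)
    (hdi : HasDerivAt γi ξi 0) (hdj : HasDerivAt γj ξj 0)
    (hlow : -1 < dot3 (γi 0) (γj 0)) (hhigh : dot3 (γi 0) (γj 0) < 1)
    (ui uj : ℝ) :
    HasDerivAt (fun t => Real.arccos (dot3 (γi t) (γj t)))
        ((ui + uj) * Real.tan (Real.arccos (dot3 (γi 0) (γj 0)) / 2)) 0 ↔
      dot3 (ξj - ξi) (γj 0 - γi 0)
        = ((ui + uj) / 2) * norm3 (γj 0 - γi 0) ^ 2 := by
  set c : ℝ := dot3 (γi 0) (γj 0) with hc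
  set d : ℝ := dot3 ξi (γj 0) + dot3 (γi 0) ξj with hd
  have hf : HasDerivAt (fun t => dot3 (γi t) (γj t)) d 0 := hasDerivAt_dot3 hdi hdj
  have hc1 : c ≠ -1 := by linarith
  have hc2 : c ≠ 1 := by linarith
  have hA : HasDerivAt (fun t => Real.arccos (dot3 (γi t) (γj t)))
      (-(1 / Real.sqrt (1 - c ^ 2)) * d) 0 :=
    by have := (Real.hasDerivAt_arccos hc1 hc2).comp 0 hf; exact this
  -- positivity facts
  have h1c : (0:ℝ) < 1 - c := by linarith
  have h1c' : (0:ℝ) < 1 + c := by linarith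
  have hsq : (0:ℝ) < 1 - c ^ 2 := by nlinarith
  set s : ℝ := Real.sqrt (1 - c ^ 2) with hs
  have hspos : 0 < s := Real.sqrt_pos.2 hsq
  -- half-angle: tan (arccos c / 2) * s = 1 - c
  set t0 : ℝ := Real.tan (Real.arccos c / 2) with ht0
  have harange : 0 ≤ Real.arccos c ∧ Real.arccos c ≤ Real.pi :=
    ⟨Real.arccos_nonneg c, Real.arccos_le_pi c⟩
  have hcosh : Real.cos (Real.arccos c / 2) = Real.sqrt ((1 + c) / 2) := by
    rw [Real.cos_half (by linarith [harange.1, Real.pi_pos]) harange.2,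
      Real.cos_arccos (by linarith) (by linarith)]
  have hsinh : Real.sin (Real.arccos c / 2) = Real.sqrt ((1 - c) / 2) := by
    rw [Real.sin_half_eq_sqrt harange.1 (by linarith [harange.2, Real.pi_pos]),
      Real.cos_arccos (by linarith) (by linarith)]
  have ht0nonneg : 0 ≤ t0 := by
    rw [ht0, Real.tan_eq_sin_div_cos, hcosh, hsinh]
    positivity
  have ht0sq : t0 ^ 2 = (1 - c) / (1 + c) := by
    rw [ht0, Real.tan_eq_sin_div_cos, div_pow, hcosh, hsinh,
      Real.sq_sqrt (by linarith : (0:ℝ) ≤ (1 - c)/2),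
      Real.sq_sqrt (by linarith : (0:ℝ) ≤ (1 + c)/2)]
    field_simp
  have hssq : s ^ 2 = 1 - c ^ 2 := Real.sq_sqrt hsq.le
  have hkey : t0 * s = 1 - c := by
    have h2 : (t0 * s) ^ 2 = (1 - c) ^ 2 := by
      rw [mul_pow, ht0sq, hssq]
      field_simp
      ring
    have h3 : t0 * s = Real.sqrt ((t0 * s) ^ 2) :=
      (Real.sqrt_sq (by positivity)).symm
    rw [h3, h2, Real.sqrt_sq h1c.le]
  have ht0val : t0 = (1 - c) / s := by
    field_simp
    linarith [hkey]
  -- the right-hand side rewritten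
  have hoi : dot3 ξi (γi 0) = 0 := dot3_orth hγi hdi
  have hoj : dot3 ξj (γj 0) = 0 := dot3_orth hγj hdj
  have hRl : dot3 (ξj - ξi) (γj 0 - γi 0) = -d := by
    have expand : dot3 (ξj - ξi) (γj 0 - γi 0)
        = dot3 ξj (γj 0) - dot3 ξj (γi 0) - dot3 ξi (γj 0) + dot3 ξi (γi 0) := by
      simp [dot3]; ring
    have hsymm : dot3 ξj (γi 0) = dot3 (γi 0) ξj := by unfold dot3; ring
    rw [expand, hoi, hoj, hsymm, hd]; ring
  have hii : dot3 (γi 0) (γi 0) = 1 := by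
    have h := hγi 0; unfold norm3 at h
    nlinarith [Real.sq_sqrt (dot3_self_nonneg (γi 0)), dot3_self_nonneg (γi 0)]
  have hjj : dot3 (γj 0) (γj 0) = 1 := by
    have h := hγj 0; unfold norm3 at h
    nlinarith [Real.sq_sqrt (dot3_self_nonneg (γj 0)), dot3_self_nonneg (γj 0)]
  have hRn : norm3 (γj 0 - γi 0) ^ 2 = 2 - 2 * c := by
    have hv : dot3 (γj 0 - γi 0) (γj 0 - γi 0) = 2 - 2 * c := by
      have expand : dot3 (γj 0 - γi 0) (γj 0 - γi 0)
          = dot3 (γj 0) (γj 0) - 2 * dot3 (γi 0) (γj 0) + dot3 (γi 0) (γi 0) := by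
        simp [dot3]; ring
      rw [expand, hii, hjj, ← hc]; ring
    unfold norm3
    rw [Real.sq_sqrt (dot3_self_nonneg _), hv]
  rw [hRl, hRn]
  constructor
  · intro H
    have heq : (ui + uj) * t0 = -(1 / s) * d := H.unique hA
    rw [ht0val] at heq
    have : (ui + uj) * (1 - c) = -d := by
      field_simp at heq
      nlinarith [heq]
    nlinarith [this]
  · intro H
    have hval : (ui + uj) * t0 = -(1 / s) * d := by
      rw [ht0val]
      have hmd : -d = (ui + uj) * (1 - c) := by nlinarith [H]
      field_simp
      nlinarith [hmd]
    rw [show (ui + uj) * Real.tan (Real.arccos c / 2) = -(1 / s) * d from hval]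
    exact hA
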